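/- For t = k² ∈ (0,1) let H_N(t) := t(t−1)·(d/dt)·log D_N[w(·,t)], and for a > −1, b > −1, c ∈ ℝ let σ(t,n,a,b,c) := t(t−1)·(d/dt)·log D_n[w₂(·,t,a,b,c)] + d₁·t + d₀, where d₁ = −n·c − (a+c)²/4 and d₀ = −(n/2)(n+a+b) + (c/4)(2n+a+b+c) − a·b/4. Then for every n ≥ 0: H_{2n}(t) = σ(t,n,−1/2,α,β) + σ(t,n,1/2,α,β) + (β²/2 + 2nβ + 1/8)·t − (β/2)(2n+α+β) + n(n+α), and H_{2n+1}(t) = σ(t,n+1,−1/2,α,β) + σ(t,n,1/2,α,β) + (β²/2 + (2n+1)β + 1/8)·t − (β/2)(2n+1+α+β) + (1/4)(2n+1)(2n+1+2α). -/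

import Mathlib

open MeasureTheory Set
open scoped ENNReal

/-- The Hankel determinant of the moments of `w(x,t) = (1-x²)^α (1-tx²)^β` on `[-1,1]`. -/
noncomputable def hankelW (α β t : ℝ) (n : ℕ) : ℝ :=
  Matrix.det (Matrix.of fun i j : Fin n =>
    ∫ x in (-1:ℝ)..1, x ^ ((i:ℕ) + (j:ℕ)) * ((1 - x ^ 2) ^ α * (1 - t * x ^ 2) ^ β))

/-- The Hankel determinant of the moments of `w₂(x,t,a,b,c) = x^a (1-x)^b (1-tx)^c`
on `[0,1]`. -/
noncomputable def hankelW2 (a b c t : ℝ) (n : ℕ) : ℝ :=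
  Matrix.det (Matrix.of fun i j : Fin n =>
    ∫ x in (0:ℝ)..1, x ^ ((i:ℕ) + (j:ℕ)) * (x ^ a * (1 - x) ^ b * (1 - t * x) ^ c))

/-- `σ(t,n,a,b,c) = t(t-1) d/dt log D_n[w₂(·,t,a,b,c)] + d₁ t + d₀` with
`d₁ = −nc − (a+c)²/4` and `d₀ = −(n/2)(n+a+b) + (c/4)(2n+a+b+c) − ab/4`. -/
noncomputable def sigmaW2 (t : ℝ) (n : ℕ) (a b c : ℝ) : ℝ :=
  t * (t - 1) * deriv (fun s => Real.log (hankelW2 a b c s n)) t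
    + (-(n:ℝ) * c - (a + c) ^ 2 / 4) * t
    + (-((n:ℝ) / 2) * ((n:ℝ) + a + b) + (c / 4) * (2 * (n:ℝ) + a + b + c) - a * b / 4)

/-- `H_N(t) = t(t-1) d/dt log D_N[w(·,t)]`. -/
noncomputable def HW (α β : ℝ) (N : ℕ) (t : ℝ) : ℝ :=
  t * (t - 1) * deriv (fun s => Real.log (hankelW α β s N)) t

lemma rpow_bound {δ M y r : ℝ} (hδ : 0 < δ) (h1 : δ ≤ y) (h2 : y ≤ M) :
    y ^ r ≤ max (M ^ r) (δ ^ r) := by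
  rcases le_or_gt 0 r with hr | hr
  · exact le_max_of_le_left (Real.rpow_le_rpow (hδ.le.trans h1) h2 hr)
  · exact le_max_of_le_right (Real.rpow_le_rpow_of_nonpos hδ h1 hr.le)

lemma max_rpow_nonneg (M δ r : ℝ) (hM : 0 ≤ M) : 0 ≤ max (M ^ r) (δ ^ r) :=
  le_trans (Real.rpow_nonneg hM r) (le_max_left _ _)

lemma aesm_of_contOn {f : ℝ → ℝ} (h : ContinuousOn f (Ioo (0:ℝ) 1)) :
    AEStronglyMeasurable f (volume.restrict (Ioc (0:ℝ) 1)) := by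
  rw [← Measure.restrict_congr_set Ioo_ae_eq_Ioc]
  exact h.aestronglyMeasurable measurableSet_Ioo

lemma contOn_kernel (a b s : ℝ) (hs0 : 0 ≤ s) (hs1 : s < 1) (k : ℕ) (r : ℝ) :
    ContinuousOn (fun x : ℝ => x ^ k * (x ^ a * (1 - x) ^ b * (1 - s * x) ^ r))
      (Ioo (0:ℝ) 1) := by
  have h1 : ContinuousOn (fun x : ℝ => x ^ a) (Ioo (0:ℝ) 1) :=
    continuousOn_id.rpow_const fun x hx => Or.inl (by simp only [id_eq]; exact hx.1.ne')
  have h2 : ContinuousOn (fun x : ℝ => (1 - x) ^ b) (Ioo (0:ℝ) 1) :=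
    (continuousOn_const.sub continuousOn_id).rpow_const fun x hx => Or.inl (by
      show (1:ℝ) - x ≠ 0; have := hx.2; intro h; nlinarith)
  have h3 : ContinuousOn (fun x : ℝ => (1 - s * x) ^ r) (Ioo (0:ℝ) 1) :=
    (continuousOn_const.sub (continuousOn_const.mul continuousOn_id)).rpow_const
      fun x hx => Or.inl (by
        show (1:ℝ) - s * x ≠ 0
        have hx1 := hx.1; have hx2 := hx.2
        have : s * x < 1 := by nlinarith
        intro h; nlinarith)
  exact (continuous_pow k).continuousOn.mul ((h1.mul h2).mul h3)

lemma integrableOn_rpow_rpow {a b : ℝ} (ha : -1 < a) (hb : -1 < b) :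
    IntegrableOn (fun x : ℝ => x ^ a * (1 - x) ^ b) (Ioc (0:ℝ) 1) := by
  have hmeas : AEStronglyMeasurable (fun x : ℝ => x ^ a * (1 - x) ^ b)
      (volume.restrict (Ioc (0:ℝ) 1)) := by
    apply aesm_of_contOn
    have h1 : ContinuousOn (fun x : ℝ => x ^ a) (Ioo (0:ℝ) 1) :=
      continuousOn_id.rpow_const fun x hx => Or.inl (by simp only [id_eq]; exact hx.1.ne')
    have h2 : ContinuousOn (fun x : ℝ => (1 - x) ^ b) (Ioo (0:ℝ) 1) :=
      (continuousOn_const.sub continuousOn_id).rpow_const fun x hx => Or.inl (by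
        show (1:ℝ) - x ≠ 0; have := hx.2; intro h; nlinarith)
    exact h1.mul h2
  have hsub : Ioc (0:ℝ) 1 = Ioc 0 2⁻¹ ∪ Ioc 2⁻¹ 1 :=
    (Ioc_union_Ioc_eq_Ioc (by norm_num) (by norm_num)).symm
  rw [hsub]
  apply IntegrableOn.union
  · refine Integrable.mono' (g := fun x : ℝ => max ((1:ℝ) ^ b) ((2:ℝ)⁻¹ ^ b) * x ^ a) ?_ ?_ ?_
    · have h := intervalIntegral.intervalIntegrable_rpow' (a := 0) (b := 2⁻¹) ha
      rw [intervalIntegrable_iff_integrableOn_Ioc_of_le (by norm_num)] at h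
      exact h.const_mul _
    · exact hmeas.mono_measure (Measure.restrict_mono (by
        intro x hx; exact ⟨hx.1, hx.2.trans (by norm_num)⟩) le_rfl)
    · rw [ae_restrict_iff' measurableSet_Ioc]
      refine ae_of_all _ fun x hx => ?_
      have hx0 : 0 < x := hx.1
      have hx2 : x ≤ 2⁻¹ := hx.2
      have hxb : (1 - x) ^ b ≤ max ((1:ℝ) ^ b) ((2:ℝ)⁻¹ ^ b) :=
        rpow_bound (by norm_num) (by linarith) (by linarith)
      rw [Real.norm_of_nonneg (mul_nonneg (Real.rpow_nonneg hx0.le a)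
        (Real.rpow_nonneg (by linarith) b))]
      calc x ^ a * (1 - x) ^ b ≤ x ^ a * max ((1:ℝ) ^ b) ((2:ℝ)⁻¹ ^ b) :=
            mul_le_mul_of_nonneg_left hxb (Real.rpow_nonneg hx0.le a)
        _ = max ((1:ℝ) ^ b) ((2:ℝ)⁻¹ ^ b) * x ^ a := mul_comm _ _
  · refine Integrable.mono' (g := fun x : ℝ => max ((1:ℝ) ^ a) ((2:ℝ)⁻¹ ^ a) * (1 - x) ^ b)
      ?_ ?_ ?_
    · have h := intervalIntegral.intervalIntegrable_rpow' (a := 0) (b := 2⁻¹) hb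
      have h2 := (h.comp_sub_left 1).symm
      have e1 : (1:ℝ) - 2⁻¹ = 2⁻¹ := by norm_num
      have e2 : (1:ℝ) - 0 = 1 := by norm_num
      rw [e1, e2] at h2
      rw [intervalIntegrable_iff_integrableOn_Ioc_of_le (by norm_num)] at h2
      exact h2.const_mul _
    · exact hmeas.mono_measure (Measure.restrict_mono (by
        intro x hx; exact ⟨lt_trans (by norm_num) hx.1, hx.2⟩) le_rfl)
    · rw [ae_restrict_iff' measurableSet_Ioc]
      refine ae_of_all _ fun x hx => ?_
      have hx0 : (2:ℝ)⁻¹ < x := hx.1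
      have hx1 : x ≤ 1 := hx.2
      have hxa : x ^ a ≤ max ((1:ℝ) ^ a) ((2:ℝ)⁻¹ ^ a) := rpow_bound (by norm_num) hx0.le hx1
      rw [Real.norm_of_nonneg (mul_nonneg (Real.rpow_nonneg (by linarith) a)
        (Real.rpow_nonneg (by linarith) b))]
      exact mul_le_mul_of_nonneg_right hxa (Real.rpow_nonneg (by linarith) b)

lemma integrableOn_kernel {a b : ℝ} (c : ℝ) (ha : -1 < a) (hb : -1 < b) {t : ℝ}
    (ht0 : 0 ≤ t) (ht1 : t < 1) (k : ℕ) :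
    IntegrableOn (fun x : ℝ => x ^ k * (x ^ a * (1 - x) ^ b * (1 - t * x) ^ c))
      (Ioc (0:ℝ) 1) := by
  refine Integrable.mono'
    (g := fun x : ℝ => max ((1:ℝ) ^ c) ((1 - t) ^ c) * (x ^ a * (1 - x) ^ b)) ?_ ?_ ?_
  · exact (integrableOn_rpow_rpow ha hb).const_mul _
  · exact aesm_of_contOn (contOn_kernel a b t ht0 ht1 k c)
  · rw [ae_restrict_iff' measurableSet_Ioc]
    refine ae_of_all _ fun x hx => ?_
    have hx0 : 0 < x := hx.1
    have hx1 : x ≤ 1 := hx.2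
    have htx : t * x ≤ t := by nlinarith
    have h1tx : (0:ℝ) < 1 - t := by linarith
    have hc : (1 - t * x) ^ c ≤ max ((1:ℝ) ^ c) ((1 - t) ^ c) :=
      rpow_bound h1tx (by linarith) (by nlinarith)
    have hk : x ^ k ≤ 1 := pow_le_one₀ hx0.le hx1
    have hna : (0:ℝ) ≤ x ^ a := Real.rpow_nonneg hx0.le a
    have hnb : (0:ℝ) ≤ (1 - x) ^ b := Real.rpow_nonneg (by linarith) b
    have hnc : (0:ℝ) ≤ (1 - t * x) ^ c := Real.rpow_nonneg (by nlinarith) c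
    rw [Real.norm_of_nonneg (mul_nonneg (pow_nonneg hx0.le k)
      (mul_nonneg (mul_nonneg hna hnb) hnc))]
    calc x ^ k * (x ^ a * (1 - x) ^ b * (1 - t * x) ^ c)
        ≤ 1 * (x ^ a * (1 - x) ^ b * (1 - t * x) ^ c) :=
          mul_le_mul_of_nonneg_right hk (mul_nonneg (mul_nonneg hna hnb) hnc)
      _ = (x ^ a * (1 - x) ^ b) * (1 - t * x) ^ c := by ring
      _ ≤ (x ^ a * (1 - x) ^ b) * max ((1:ℝ) ^ c) ((1 - t) ^ c) :=
          mul_le_mul_of_nonneg_left hc (mul_nonneg hna hnb)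
      _ = _ := mul_comm _ _

lemma intervalIntegrable_kernel {a b : ℝ} (c : ℝ) (ha : -1 < a) (hb : -1 < b) {t : ℝ}
    (ht0 : 0 ≤ t) (ht1 : t < 1) (k : ℕ) :
    IntervalIntegrable (fun x : ℝ => x ^ k * (x ^ a * (1 - x) ^ b * (1 - t * x) ^ c))
      volume 0 1 := by
  rw [intervalIntegrable_iff_integrableOn_Ioc_of_le (by norm_num)]
  exact integrableOn_kernel c ha hb ht0 ht1 k

lemma integrableOn_wker {α β : ℝ} (hα : -1 < α) {t : ℝ} (ht0 : 0 ≤ t) (ht1 : t < 1)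
    (k : ℕ) :
    IntegrableOn (fun x : ℝ => x ^ k * ((1 - x ^ 2) ^ α * (1 - t * x ^ 2) ^ β))
      (Ioc (0:ℝ) 1) := by
  refine Integrable.mono'
    (g := fun x : ℝ => (max ((2:ℝ) ^ α) ((1:ℝ) ^ α) * max ((1:ℝ) ^ β) ((1 - t) ^ β)) *
      (1 - x) ^ α) ?_ ?_ ?_
  · have h := intervalIntegral.intervalIntegrable_rpow' (a := 0) (b := 1) hα
    have h2 := (h.comp_sub_left 1).symm
    have e1 : (1:ℝ) - 1 = 0 := by norm_num
    have e2 : (1:ℝ) - 0 = 1 := by norm_num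
    rw [e1, e2] at h2
    rw [intervalIntegrable_iff_integrableOn_Ioc_of_le (by norm_num)] at h2
    exact h2.const_mul _
  · apply aesm_of_contOn
    have h1 : ContinuousOn (fun x : ℝ => (1 - x ^ 2) ^ α) (Ioo (0:ℝ) 1) :=
      (continuousOn_const.sub (continuous_pow 2).continuousOn).rpow_const fun x hx =>
        Or.inl (by show (1:ℝ) - x ^ 2 ≠ 0; have h1 := hx.1; have h2 := hx.2; intro h; nlinarith)
    have h2 : ContinuousOn (fun x : ℝ => (1 - t * x ^ 2) ^ β) (Ioo (0:ℝ) 1) :=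
      (continuousOn_const.sub (continuousOn_const.mul (continuous_pow 2).continuousOn)).rpow_const
        fun x hx => Or.inl (by
          have h1 := hx.1; have h2 := hx.2
          have : x ^ 2 < 1 := by nlinarith
          show (1:ℝ) - t * x ^ 2 ≠ 0
          intro h; nlinarith)
    exact (continuous_pow k).continuousOn.mul (h1.mul h2)
  · rw [ae_restrict_iff' measurableSet_Ioc]
    refine ae_of_all _ fun x hx => ?_
    have hx0 : 0 < x := hx.1
    have hx1 : x ≤ 1 := hx.2
    have hx2 : x ^ 2 ≤ 1 := by nlinarith
    have htx : t * x ^ 2 ≤ t := by nlinarith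
    have hmul : ((1:ℝ) - x ^ 2) ^ α = (1 - x) ^ α * (1 + x) ^ α := by
      rw [show (1:ℝ) - x ^ 2 = (1 - x) * (1 + x) by ring,
        Real.mul_rpow (by linarith) (by linarith)]
    have hb1 : (1 + x) ^ α ≤ max ((2:ℝ) ^ α) ((1:ℝ) ^ α) :=
      rpow_bound (by norm_num) (by linarith) (by linarith)
    have hb2 : (1 - t * x ^ 2) ^ β ≤ max ((1:ℝ) ^ β) ((1 - t) ^ β) :=
      rpow_bound (by linarith) (by linarith) (by nlinarith)
    have hk : x ^ k ≤ 1 := pow_le_one₀ hx0.le hx1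
    have hn1 : (0:ℝ) ≤ (1 - x) ^ α := Real.rpow_nonneg (by linarith) α
    have hn2 : (0:ℝ) ≤ (1 + x) ^ α := Real.rpow_nonneg (by linarith) α
    have hn3 : (0:ℝ) ≤ (1 - t * x ^ 2) ^ β := Real.rpow_nonneg (by nlinarith) β
    have hmaxA : (0:ℝ) ≤ max ((2:ℝ) ^ α) ((1:ℝ) ^ α) := max_rpow_nonneg _ _ _ (by norm_num)
    have hmaxB : (0:ℝ) ≤ max ((1:ℝ) ^ β) ((1 - t) ^ β) := max_rpow_nonneg _ _ _ (by norm_num)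
    rw [Real.norm_of_nonneg (mul_nonneg (pow_nonneg hx0.le k)
      (mul_nonneg (by rw [hmul]; exact mul_nonneg hn1 hn2) hn3)), hmul]
    calc x ^ k * ((1 - x) ^ α * (1 + x) ^ α * (1 - t * x ^ 2) ^ β)
        ≤ 1 * ((1 - x) ^ α * (1 + x) ^ α * (1 - t * x ^ 2) ^ β) :=
          mul_le_mul_of_nonneg_right hk (mul_nonneg (mul_nonneg hn1 hn2) hn3)
      _ = (1 - x) ^ α * (1 + x) ^ α * (1 - t * x ^ 2) ^ β := one_mul _
      _ ≤ ((1 - x) ^ α * max ((2:ℝ) ^ α) ((1:ℝ) ^ α)) * max ((1:ℝ) ^ β) ((1 - t) ^ β) :=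
          mul_le_mul (mul_le_mul_of_nonneg_left hb1 hn1) hb2 hn3 (mul_nonneg hn1 hmaxA)
      _ = _ := by ring

lemma det_hankel_split (m : ℕ → ℝ) (hodd : ∀ k, m (2 * k + 1) = 0)
    (n₀ n₁ : ℕ) (h1 : n₁ ≤ n₀) (h2 : n₀ ≤ n₁ + 1) :
    Matrix.det (Matrix.of fun i j : Fin (n₀ + n₁) => m ((i : ℕ) + (j : ℕ)))
      = Matrix.det (Matrix.of fun i j : Fin n₀ => m (2 * ((i : ℕ) + (j : ℕ))))
        * Matrix.det (Matrix.of fun i j : Fin n₁ => m (2 * ((i : ℕ) + (j : ℕ)) + 2)) := by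
  classical
  let e : Fin n₀ ⊕ Fin n₁ ≃ Fin (n₀ + n₁) :=
    { toFun := Sum.elim (fun i => ⟨2 * (i : ℕ), by have := i.isLt; omega⟩)
        (fun i => ⟨2 * (i : ℕ) + 1, by have := i.isLt; omega⟩)
      invFun := fun k =>
        if h : (k : ℕ) % 2 = 0 then Sum.inl ⟨(k : ℕ) / 2, by have := k.isLt; omega⟩
        else Sum.inr ⟨(k : ℕ) / 2, by have := k.isLt; omega⟩
      left_inv := by
        rintro (i | i) <;> dsimp only [Sum.elim_inl, Sum.elim_inr]
        · rw [dif_pos (by omega)]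
          congr 1
          exact Fin.ext (by show 2 * (i : ℕ) / 2 = (i : ℕ); omega)
        · rw [dif_neg (by omega)]
          congr 1
          exact Fin.ext (by show (2 * (i : ℕ) + 1) / 2 = (i : ℕ); omega)
      right_inv := by
        intro k
        dsimp only
        by_cases h : (k : ℕ) % 2 = 0
        · rw [dif_pos h]
          exact Fin.ext (by show 2 * ((k : ℕ) / 2) = (k : ℕ); omega)
        · rw [dif_neg h]
          exact Fin.ext (by show 2 * ((k : ℕ) / 2) + 1 = (k : ℕ); omega) }
  rw [← Matrix.det_submatrix_equiv_self e
    (Matrix.of fun i j : Fin (n₀ + n₁) => m ((i : ℕ) + (j : ℕ)))]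
  have hsub : (Matrix.of fun i j : Fin (n₀ + n₁) => m ((i : ℕ) + (j : ℕ))).submatrix e e
      = Matrix.fromBlocks
          (Matrix.of fun i j : Fin n₀ => m (2 * ((i : ℕ) + (j : ℕ)))) 0 0
          (Matrix.of fun i j : Fin n₁ => m (2 * ((i : ℕ) + (j : ℕ)) + 2)) := by
    ext i j
    rcases i with i | i <;> rcases j with j | j
    · show m (2 * (i : ℕ) + 2 * (j : ℕ)) = m (2 * ((i : ℕ) + (j : ℕ)))
      congr 1; omega
    · show m (2 * (i : ℕ) + (2 * (j : ℕ) + 1)) = 0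
      rw [show 2 * (i : ℕ) + (2 * (j : ℕ) + 1) = 2 * ((i : ℕ) + (j : ℕ)) + 1 by omega]
      exact hodd _
    · show m (2 * (i : ℕ) + 1 + 2 * (j : ℕ)) = 0
      rw [show 2 * (i : ℕ) + 1 + 2 * (j : ℕ) = 2 * ((i : ℕ) + (j : ℕ)) + 1 by omega]
      exact hodd _
    · show m (2 * (i : ℕ) + 1 + (2 * (j : ℕ) + 1)) = m (2 * ((i : ℕ) + (j : ℕ)) + 2)
      congr 1; omega
  rw [hsub, Matrix.det_fromBlocks_zero₁₂]

lemma mW_odd (α β t : ℝ) (k : ℕ) :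
    ∫ x in (-1:ℝ)..1, x ^ (2 * k + 1) * ((1 - x ^ 2) ^ α * (1 - t * x ^ 2) ^ β) = 0 := by
  have h := intervalIntegral.integral_comp_neg (a := (-1:ℝ)) (b := 1)
    (fun x : ℝ => x ^ (2 * k + 1) * ((1 - x ^ 2) ^ α * (1 - t * x ^ 2) ^ β))
  rw [neg_neg] at h
  have h2 : (∫ x in (-1:ℝ)..1,
      (fun x : ℝ => x ^ (2 * k + 1) * ((1 - x ^ 2) ^ α * (1 - t * x ^ 2) ^ β)) (-x))
      = -∫ x in (-1:ℝ)..1, x ^ (2 * k + 1) * ((1 - x ^ 2) ^ α * (1 - t * x ^ 2) ^ β) := by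
    rw [← intervalIntegral.integral_neg]
    apply intervalIntegral.integral_congr
    intro x _
    show (-x) ^ (2 * k + 1) * ((1 - (-x) ^ 2) ^ α * (1 - t * (-x) ^ 2) ^ β) = _
    rw [Odd.neg_pow ⟨k, by ring⟩, neg_sq]
    ring
  rw [h2] at h
  linarith

lemma mW_even (α β : ℝ) (hα : -1 < α) {t : ℝ} (ht0 : 0 < t) (ht1 : t < 1) (k : ℕ) :
    ∫ x in (-1:ℝ)..1, x ^ (2 * k) * ((1 - x ^ 2) ^ α * (1 - t * x ^ 2) ^ β)
      = ∫ x in (0:ℝ)..1, x ^ k * (x ^ (-1/2 : ℝ) * (1 - x) ^ α * (1 - t * x) ^ β) := by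
  set f : ℝ → ℝ := fun x => x ^ (2 * k) * ((1 - x ^ 2) ^ α * (1 - t * x ^ 2) ^ β) with hfdef
  set g : ℝ → ℝ :=
    fun u => u ^ k * (u ^ (-1/2 : ℝ) * (1 - u) ^ α * (1 - t * u) ^ β) / 2 with hgdef
  set φ : ℝ → ℝ := fun y => y ^ 2 with hφdef
  have heven : ∀ x, f (-x) = f x := by
    intro x
    show (-x) ^ (2 * k) * ((1 - (-x) ^ 2) ^ α * (1 - t * (-x) ^ 2) ^ β) = _
    rw [Even.neg_pow ⟨k, by ring⟩, neg_sq]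
  have hint1 : IntervalIntegrable f volume 0 1 := by
    rw [intervalIntegrable_iff_integrableOn_Ioc_of_le zero_le_one]
    exact integrableOn_wker hα ht0.le ht1 (2 * k)
  have hint2 : IntervalIntegrable f volume (-1) 0 := by
    have h := (IntervalIntegrable.iff_comp_neg (f := f) (a := 0) (b := 1)).mp hint1
    rw [funext heven] at h
    simpa using h.symm
  have hsplit := (intervalIntegral.integral_add_adjacent_intervals hint2 hint1).symm
  have hrefl : (∫ x in (-1:ℝ)..0, f x) = ∫ x in (0:ℝ)..1, f x := by
    have h := intervalIntegral.integral_comp_neg (a := (0:ℝ)) (b := 1) f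
    rw [neg_zero] at h
    rw [← h]
    exact intervalIntegral.integral_congr (g := f) fun x _ => heven x
  -- the substitution u = x^2
  have himg1 : φ '' Ioo (0:ℝ) 1 ⊆ Ioo (0:ℝ) 1 := by
    rintro _ ⟨x, hx, rfl⟩
    simp only [hφdef]
    exact ⟨pow_pos hx.1 2, by nlinarith [hx.1, hx.2]⟩
  have himg2 : φ '' uIcc (0:ℝ) 1 ⊆ Icc (0:ℝ) 1 := by
    rintro _ ⟨x, hx, rfl⟩
    rw [uIcc_of_le zero_le_one] at hx
    simp only [hφdef]
    exact ⟨by positivity, by nlinarith [hx.1, hx.2]⟩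
  have hgcont : ContinuousOn g (Ioo (0:ℝ) 1) :=
    (contOn_kernel (-1/2) α t ht0.le ht1 k β).div_const 2
  have hgint : IntegrableOn g (Icc (0:ℝ) 1) := by
    rw [integrableOn_Icc_iff_integrableOn_Ioc]
    exact (integrableOn_kernel β (by norm_num) hα ht0.le ht1 k).div_const 2
  have hderiv : ∀ x ∈ Ioo (min (0:ℝ) 1) (max (0:ℝ) 1),
      HasDerivWithinAt φ ((fun y : ℝ => 2 * y) x) (Ioi x) x := by
    intro x _
    have h : HasDerivAt φ (2 * x) x := by simpa using hasDerivAt_pow 2 x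
    exact h.hasDerivWithinAt
  have hptwise : ∀ x : ℝ, 0 < x → f x = (fun y : ℝ => 2 * y) x • (g ∘ φ) x := by
    intro x hx0
    have hsq : ((x ^ 2 : ℝ)) ^ (-1/2 : ℝ) = x⁻¹ := by
      rw [← Real.rpow_natCast x 2, ← Real.rpow_mul hx0.le]
      norm_num [Real.rpow_neg_one x]
    show f x = (2 * x) * g (x ^ 2)
    rw [hgdef]
    simp only
    rw [hsq, hfdef]
    simp only
    rw [pow_mul]
    field_simp
  have hcomp := intervalIntegral.integral_comp_smul_deriv''' (a := (0:ℝ)) (b := 1)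
    (f := φ) (f' := fun y : ℝ => 2 * y) (g := g)
    ((continuous_pow 2).continuousOn) hderiv
    (by
      rw [min_eq_left zero_le_one, max_eq_right zero_le_one]
      exact hgcont.mono himg1)
    (hgint.mono_set himg2)
    (by
      rw [uIcc_of_le zero_le_one, integrableOn_Icc_iff_integrableOn_Ioc]
      exact (integrableOn_wker hα ht0.le ht1 (2 * k)).congr_fun
        (fun x hx => hptwise x hx.1) measurableSet_Ioc)
  have hφ0 : φ 0 = 0 := by simp [hφdef]
  have hφ1 : φ 1 = 1 := by simp [hφdef]
  rw [hφ0, hφ1] at hcomp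
  -- identify ∫ f on [0,1] with the substituted integral
  have hcong : (∫ x in (0:ℝ)..1, f x) = ∫ x in (0:ℝ)..1, (fun y : ℝ => 2 * y) x • (g ∘ φ) x := by
    apply intervalIntegral.integral_congr_ae
    refine ae_of_all _ fun x hx => ?_
    rw [uIoc_of_le zero_le_one] at hx
    exact hptwise x hx.1
  have hgval : (∫ u in (0:ℝ)..1, g u)
      = (∫ u in (0:ℝ)..1, u ^ k * (u ^ (-1/2 : ℝ) * (1 - u) ^ α * (1 - t * u) ^ β)) / 2 := by
    rw [hgdef]
    exact intervalIntegral.integral_div 2 _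
  rw [hsplit, hrefl, hcong, hcomp, hgval]
  ring

lemma mu_step (α β t : ℝ) (k : ℕ) :
    ∫ x in (0:ℝ)..1, x ^ (k + 1) * (x ^ (-1/2 : ℝ) * (1 - x) ^ α * (1 - t * x) ^ β)
      = ∫ x in (0:ℝ)..1, x ^ k * (x ^ (1/2 : ℝ) * (1 - x) ^ α * (1 - t * x) ^ β) := by
  apply intervalIntegral.integral_congr
  intro x hx
  rw [uIcc_of_le zero_le_one] at hx
  show x ^ (k + 1) * (x ^ (-1/2 : ℝ) * (1 - x) ^ α * (1 - t * x) ^ β)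
    = x ^ k * (x ^ (1/2 : ℝ) * (1 - x) ^ α * (1 - t * x) ^ β)
  rcases eq_or_lt_of_le hx.1 with h0 | h0
  · rw [← h0]
    rw [Real.zero_rpow (by norm_num : (1/2 : ℝ) ≠ 0)]
    simp
  · have hxx : x * x ^ (-1/2 : ℝ) = x ^ (1/2 : ℝ) := by
      nth_rewrite 1 [← Real.rpow_one x]
      rw [← Real.rpow_add h0]
      norm_num
    rw [pow_succ, ← hxx]
    ring

lemma hankelW2_pos {a b c t : ℝ} (ha : -1 < a) (hb : -1 < b) (ht0 : 0 < t) (ht1 : t < 1)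
    (n : ℕ) : 0 < hankelW2 a b c t n := by
  classical
  simp only [hankelW2]
  set w : ℝ → ℝ := fun x => x ^ a * (1 - x) ^ b * (1 - t * x) ^ c with hw
  have hwint : ∀ k : ℕ, IntegrableOn (fun x : ℝ => x ^ k * w x) (Ioc (0:ℝ) 1) :=
    fun k => integrableOn_kernel c ha hb ht0.le ht1 k
  have hwpos : ∀ x ∈ Ioo (0:ℝ) 1, 0 < w x := by
    intro x hx
    have h1 : (0:ℝ) < 1 - x := by have := hx.2; linarith
    have h2 : (0:ℝ) < 1 - t * x := by nlinarith [hx.1, hx.2]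
    exact mul_pos (mul_pos (Real.rpow_pos_of_pos hx.1 a) (Real.rpow_pos_of_pos h1 b))
      (Real.rpow_pos_of_pos h2 c)
  have hwnn : ∀ x ∈ Ioc (0:ℝ) 1, 0 ≤ w x := by
    intro x hx
    have h1 : (0:ℝ) ≤ 1 - x := by have := hx.2; linarith
    have h2 : (0:ℝ) ≤ 1 - t * x := by nlinarith [hx.1, hx.2]
    exact mul_nonneg (mul_nonneg (Real.rpow_nonneg hx.1.le a) (Real.rpow_nonneg h1 b))
      (Real.rpow_nonneg h2 c)
  apply Matrix.PosDef.det_pos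
  rw [Matrix.posDef_iff_dotProduct_mulVec]
  constructor
  · ext i j
    simp only [Matrix.conjTranspose_apply, Matrix.of_apply, star_trivial]
    rw [Nat.add_comm (j:ℕ) (i:ℕ)]
  · intro v hv
    simp only [dotProduct, Matrix.mulVec, Matrix.of_apply, Pi.star_apply, star_trivial]
    have hentry : ∀ i j : Fin n,
        (∫ x in (0:ℝ)..1, x ^ ((i:ℕ) + (j:ℕ)) * w x)
          = ∫ x in Ioc (0:ℝ) 1, x ^ ((i:ℕ) + (j:ℕ)) * w x :=
      fun i j => intervalIntegral.integral_of_le zero_le_one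
    set p : Polynomial ℝ := ∑ i : Fin n, Polynomial.C (v i) * Polynomial.X ^ (i:ℕ) with hp
    have hpeval : ∀ x : ℝ, p.eval x = ∑ i : Fin n, v i * x ^ (i:ℕ) := by
      intro x
      rw [hp, Polynomial.eval_finset_sum]
      simp
    have hpcoeff : ∀ i : Fin n, p.coeff (i:ℕ) = v i := by
      intro i
      rw [hp, Polynomial.finset_sum_coeff]
      simp only [Polynomial.coeff_C_mul, Polynomial.coeff_X_pow]
      rw [Finset.sum_eq_single i]
      · simp
      · intro j _ hj
        rw [if_neg (fun h => hj (Fin.ext h.symm))]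
        simp
      · intro h; exact absurd (Finset.mem_univ i) h
    have hpne : p ≠ 0 := by
      intro h0
      obtain ⟨i, hi⟩ := Function.ne_iff.mp hv
      simp only [Pi.zero_apply] at hi
      exact hi (by rw [← hpcoeff i, h0, Polynomial.coeff_zero])
    have hpt : ∀ x : ℝ, (∑ i : Fin n, v i * ∑ j : Fin n, x ^ ((i:ℕ)+(j:ℕ)) * w x * v j)
        = (p.eval x) ^ 2 * w x := by
      intro x
      rw [hpeval, sq, Finset.sum_mul_sum, Finset.sum_mul]
      refine Finset.sum_congr rfl fun i _ => ?_
      rw [Finset.mul_sum, Finset.sum_mul]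
      refine Finset.sum_congr rfl fun j _ => ?_
      rw [pow_add]
      ring
    have hsum1 : ∀ i : Fin n,
        (∑ j : Fin n, (∫ x in Ioc (0:ℝ) 1, x ^ ((i:ℕ)+(j:ℕ)) * w x) * v j)
          = ∫ x in Ioc (0:ℝ) 1, ∑ j : Fin n, x ^ ((i:ℕ)+(j:ℕ)) * w x * v j := by
      intro i
      rw [integral_finset_sum (ι := Fin n) Finset.univ (fun j _ => ((hwint ((i:ℕ)+(j:ℕ))).mul_const (v j)))]
      refine Finset.sum_congr rfl fun j _ => ?_
      exact (integral_mul_const (v j) _).symm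
    have hsum2 :
        (∑ i : Fin n, v i * ∫ x in Ioc (0:ℝ) 1, ∑ j : Fin n, x ^ ((i:ℕ)+(j:ℕ)) * w x * v j)
          = ∫ x in Ioc (0:ℝ) 1, ∑ i : Fin n, v i * ∑ j : Fin n, x ^ ((i:ℕ)+(j:ℕ)) * w x * v j := by
      rw [integral_finset_sum (ι := Fin n) Finset.univ (fun i _ =>
        (integrable_finset_sum (ι := Fin n) Finset.univ
          (fun j _ => ((hwint ((i:ℕ)+(j:ℕ))).mul_const (v j)))).const_mul (v i))]
      refine Finset.sum_congr rfl fun i _ => ?_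
      exact (integral_const_mul (v i) _).symm
    have hqint : IntegrableOn (fun x : ℝ => (p.eval x) ^ 2 * w x) (Ioc (0:ℝ) 1) := by
      have hI : IntegrableOn
          (fun x : ℝ => ∑ i : Fin n, v i * ∑ j : Fin n, x ^ ((i:ℕ)+(j:ℕ)) * w x * v j)
          (Ioc (0:ℝ) 1) :=
        integrable_finset_sum (ι := Fin n) Finset.univ (fun i _ =>
          (integrable_finset_sum (ι := Fin n) Finset.univ
            (fun j _ => ((hwint ((i:ℕ)+(j:ℕ))).mul_const (v j)))).const_mul (v i))
      exact hI.congr (ae_of_all _ fun x => hpt x)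
    have hnn : 0 ≤ᵐ[volume.restrict (Ioc (0:ℝ) 1)] fun x : ℝ => (p.eval x) ^ 2 * w x := by
      filter_upwards [ae_restrict_mem measurableSet_Ioc] with x hx
      simpa using mul_nonneg (sq_nonneg _) (hwnn x hx)
    calc (0:ℝ)
        < ∫ x in Ioc (0:ℝ) 1, (p.eval x) ^ 2 * w x := by
          rw [setIntegral_pos_iff_support_of_nonneg_ae hnn hqint]
          have hsubset : Ioo (0:ℝ) 1 \ {x | p.IsRoot x}
              ⊆ Function.support (fun x : ℝ => (p.eval x) ^ 2 * w x) ∩ Ioc (0:ℝ) 1 := by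
            rintro x ⟨hx, hxr⟩
            refine ⟨?_, ⟨hx.1, hx.2.le⟩⟩
            have hev : p.eval x ≠ 0 := hxr
            have : (0:ℝ) < (p.eval x) ^ 2 * w x :=
              mul_pos (lt_of_le_of_ne (sq_nonneg _) (Ne.symm (pow_ne_zero 2 hev)))
                (hwpos x hx)
            exact this.ne'
          calc (0:ℝ≥0∞) < volume (Ioo (0:ℝ) 1) := by simp [Real.volume_Ioo]
            _ = volume (Ioo (0:ℝ) 1 \ {x | p.IsRoot x}) :=
              (measure_diff_null ((Polynomial.finite_setOf_isRoot hpne).measure_zero _)).symm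
            _ ≤ _ := measure_mono hsubset
      _ = ∑ i : Fin n, v i * ∑ j : Fin n,
            (∫ x in (0:ℝ)..1, x ^ ((i:ℕ)+(j:ℕ)) * w x) * v j := by
          simp only [hentry, hsum1, hsum2]
          exact (integral_congr_ae (ae_of_all _ fun x => hpt x)).symm

lemma differentiableAt_entry {a b : ℝ} (c : ℝ) (ha : -1 < a) (hb : -1 < b) {t : ℝ}
    (ht0 : 0 < t) (ht1 : t < 1) (k : ℕ) :
    DifferentiableAt ℝ
      (fun s => ∫ x in (0:ℝ)..1, x ^ k * (x ^ a * (1 - x) ^ b * (1 - s * x) ^ c)) t := by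
  set t1 : ℝ := (1 + t) / 2 with ht1def
  have htt1 : t < t1 := by rw [ht1def]; linarith
  have ht11 : t1 < 1 := by rw [ht1def]; linarith
  have ht10 : 0 < 1 - t1 := by linarith
  set ε : ℝ := min (t / 2) ((1 - t) / 2) with hεdef
  have hε0 : 0 < ε := lt_min (by linarith) (by linarith)
  have hball : ∀ s ∈ Metric.ball t ε, 0 < s ∧ s < t1 := by
    intro s hs
    rw [Metric.mem_ball, Real.dist_eq, abs_lt] at hs
    have h1 : ε ≤ t / 2 := min_le_left _ _
    have h2 : ε ≤ (1 - t) / 2 := min_le_right _ _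
    constructor
    · linarith [hs.1]
    · rw [ht1def]; linarith [hs.2]
  set M : ℝ := max ((1:ℝ) ^ (c - 1)) ((1 - t1) ^ (c - 1)) with hM
  have hMnn : 0 ≤ M := le_trans (Real.rpow_nonneg zero_le_one _) (le_max_left _ _)
  have key := intervalIntegral.hasDerivAt_integral_of_dominated_loc_of_deriv_le
    (μ := volume) (a := (0:ℝ)) (b := 1) (x₀ := t) (s := Metric.ball t ε)
    (F := fun s x => x ^ k * (x ^ a * (1 - x) ^ b * (1 - s * x) ^ c))
    (F' := fun s x => x ^ k * (x ^ a * (1 - x) ^ b * (-(1 * x) * c * (1 - s * x) ^ (c - 1))))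
    (bound := fun x => |c| * ((x ^ a * (1 - x) ^ b) * M))
    (Metric.ball_mem_nhds t hε0)
    (by
      filter_upwards [Ioo_mem_nhds ht0 ht1] with s hs
      rw [uIoc_of_le (zero_le_one : (0:ℝ) ≤ 1)]
      exact aesm_of_contOn (contOn_kernel a b s hs.1.le hs.2 k c))
    (intervalIntegrable_kernel c ha hb ht0.le ht1 k)
    (by
      rw [uIoc_of_le (zero_le_one : (0:ℝ) ≤ 1)]
      apply aesm_of_contOn
      have hc1 : ContinuousOn (fun x : ℝ => x ^ a) (Ioo (0:ℝ) 1) :=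
        continuousOn_id.rpow_const fun x hx => Or.inl (by simp only [id_eq]; exact hx.1.ne')
      have hc2 : ContinuousOn (fun x : ℝ => (1 - x) ^ b) (Ioo (0:ℝ) 1) :=
        (continuousOn_const.sub continuousOn_id).rpow_const fun x hx => Or.inl (by
          show (1:ℝ) - x ≠ 0; have := hx.2; intro h; nlinarith)
      have hc3 : ContinuousOn (fun x : ℝ => (1 - t * x) ^ (c - 1)) (Ioo (0:ℝ) 1) :=
        (continuousOn_const.sub (continuousOn_const.mul continuousOn_id)).rpow_const
          fun x hx => Or.inl (by
            show (1:ℝ) - t * x ≠ 0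
            have hx1 := hx.1; have hx2 := hx.2
            have : t * x < 1 := by nlinarith
            intro h; nlinarith)
      exact (continuous_pow k).continuousOn.mul ((hc1.mul hc2).mul
        ((((continuous_const.mul continuous_id).neg.mul
          continuous_const).continuousOn).mul hc3)))
    (by
      refine ae_of_all _ fun x hx s hs => ?_
      rw [uIoc_of_le (zero_le_one : (0:ℝ) ≤ 1)] at hx
      obtain ⟨hs0, hst1⟩ := hball s hs
      have hx0 : 0 < x := hx.1
      have hx1 : x ≤ 1 := hx.2
      have hsx : s * x ≤ t1 := by nlinarith
      have hsx0 : 0 ≤ s * x := by positivity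
      have hQ : (0:ℝ) ≤ x ^ a * (1 - x) ^ b :=
        mul_nonneg (Real.rpow_nonneg hx0.le a) (Real.rpow_nonneg (by linarith) b)
      have hR : (0:ℝ) ≤ (1 - s * x) ^ (c - 1) := Real.rpow_nonneg (by linarith) _
      have h2 : (1 - s * x) ^ (c - 1) ≤ M := by
        rw [hM]
        exact rpow_bound ht10 (by nlinarith) (by linarith)
      have hk1 : x ^ k ≤ 1 := pow_le_one₀ hx0.le hx1
      have hFP : x ^ k * (x ^ a * (1 - x) ^ b *
            (-(1 * x) * c * (1 - s * x) ^ (c - 1)))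
          = (-c) * ((x ^ k * (x ^ a * (1 - x) ^ b)) * ((1 - s * x) ^ (c - 1) * x)) := by
        ring
      rw [Real.norm_eq_abs, hFP, abs_mul, abs_neg, abs_of_nonneg (mul_nonneg
        (mul_nonneg (pow_nonneg hx0.le k) hQ) (mul_nonneg hR hx0.le))]
      have hstep : (x ^ k * (x ^ a * (1 - x) ^ b)) * ((1 - s * x) ^ (c - 1) * x)
          ≤ (1 * (x ^ a * (1 - x) ^ b)) * (M * 1) :=
        mul_le_mul (mul_le_mul_of_nonneg_right hk1 hQ)
          (mul_le_mul h2 hx1 hx0.le hMnn) (mul_nonneg hR hx0.le)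
          (by rw [one_mul]; exact hQ)
      have : (x ^ k * (x ^ a * (1 - x) ^ b)) * ((1 - s * x) ^ (c - 1) * x)
          ≤ (x ^ a * (1 - x) ^ b) * M := by linarith [hstep]
      exact mul_le_mul_of_nonneg_left this (abs_nonneg c))
    (by
      rw [intervalIntegrable_iff_integrableOn_Ioc_of_le (zero_le_one : (0:ℝ) ≤ 1)]
      exact (((integrableOn_rpow_rpow ha hb).mul_const M).const_mul (|c|)))
    (by
      refine ae_of_all _ fun x hx s hs => ?_
      rw [uIoc_of_le (zero_le_one : (0:ℝ) ≤ 1)] at hx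
      obtain ⟨hs0, hst1⟩ := hball s hs
      have hx0 : 0 < x := hx.1
      have hx1 : x ≤ 1 := hx.2
      have hsx1 : s * x < 1 := by nlinarith
      have hne : 1 - s * x ≠ 0 := by intro h; nlinarith
      have h1 : HasDerivAt (fun y : ℝ => 1 - y * x) (-(1 * x)) s :=
        ((hasDerivAt_id s).mul_const x).const_sub 1
      have h2 : HasDerivAt (fun y : ℝ => (1 - y * x) ^ c)
          (-(1 * x) * c * (1 - s * x) ^ (c - 1)) s := by
        have := h1.rpow_const (p := c) (Or.inl hne)
        simpa using this
      exact ((h2.const_mul (x ^ a * (1 - x) ^ b)).const_mul (x ^ k)))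
  exact key.2.differentiableAt

lemma differentiableAt_hankelW2 {a b : ℝ} (c : ℝ) (ha : -1 < a) (hb : -1 < b) {t : ℝ}
    (ht0 : 0 < t) (ht1 : t < 1) (n : ℕ) :
    DifferentiableAt ℝ (fun s => hankelW2 a b c s n) t := by
  simp only [hankelW2, Matrix.det_apply', Matrix.of_apply]
  apply DifferentiableAt.fun_sum
  intro σ _
  apply DifferentiableAt.const_mul
  apply DifferentiableAt.fun_finsetProd
  intro i _
  exact differentiableAt_entry c ha hb ht0 ht1 _

lemma hankelW_factor (α β : ℝ) (hα : -1 < α) {s : ℝ} (hs0 : 0 < s) (hs1 : s < 1)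
    (N n₀ n₁ : ℕ) (hN : N = n₀ + n₁) (h1 : n₁ ≤ n₀) (h2 : n₀ ≤ n₁ + 1) :
    hankelW α β s N = hankelW2 (-1/2) α β s n₀ * hankelW2 (1/2) α β s n₁ := by
  subst hN
  have hsplit := det_hankel_split
    (fun kk => ∫ x in (-1:ℝ)..1, x ^ kk * ((1 - x ^ 2) ^ α * (1 - s * x ^ 2) ^ β))
    (fun k => mW_odd α β s k) n₀ n₁ h1 h2
  calc hankelW α β s (n₀ + n₁)
      = Matrix.det (Matrix.of fun i j : Fin n₀ =>
          ∫ x in (-1:ℝ)..1, x ^ (2 * ((i:ℕ) + (j:ℕ))) * ((1 - x ^ 2) ^ α * (1 - s * x ^ 2) ^ β))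
        * Matrix.det (Matrix.of fun i j : Fin n₁ =>
          ∫ x in (-1:ℝ)..1, x ^ (2 * ((i:ℕ) + (j:ℕ)) + 2) *
            ((1 - x ^ 2) ^ α * (1 - s * x ^ 2) ^ β)) := hsplit
    _ = hankelW2 (-1/2) α β s n₀ * hankelW2 (1/2) α β s n₁ := by
        rw [hankelW2, hankelW2]
        congr 1
        · congr 1
          ext i j
          simp only [Matrix.of_apply]
          exact mW_even α β hα hs0 hs1 ((i:ℕ) + (j:ℕ))
        · congr 1
          ext i j
          simp only [Matrix.of_apply]
          rw [show 2 * ((i:ℕ) + (j:ℕ)) + 2 = 2 * (((i:ℕ) + (j:ℕ)) + 1) by ring]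
          rw [mW_even α β hα hs0 hs1 (((i:ℕ) + (j:ℕ)) + 1)]
          exact mu_step α β s ((i:ℕ) + (j:ℕ))

lemma deriv_log_hankelW (α β : ℝ) (hα : -1 < α) {t : ℝ} (ht0 : 0 < t) (ht1 : t < 1)
    (N n₀ n₁ : ℕ) (hN : N = n₀ + n₁) (h1 : n₁ ≤ n₀) (h2 : n₀ ≤ n₁ + 1) :
    deriv (fun s => Real.log (hankelW α β s N)) t
      = deriv (fun s => Real.log (hankelW2 (-1/2) α β s n₀)) t
        + deriv (fun s => Real.log (hankelW2 (1/2) α β s n₁)) t := by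
  have hhalf : (-1:ℝ) < -1/2 := by norm_num
  have hhalf2 : (-1:ℝ) < 1/2 := by norm_num
  have hd1 : DifferentiableAt ℝ (fun s => Real.log (hankelW2 (-1/2) α β s n₀)) t :=
    (differentiableAt_hankelW2 β hhalf hα ht0 ht1 n₀).log
      (hankelW2_pos hhalf hα ht0 ht1 n₀).ne'
  have hd2 : DifferentiableAt ℝ (fun s => Real.log (hankelW2 (1/2) α β s n₁)) t :=
    (differentiableAt_hankelW2 β hhalf2 hα ht0 ht1 n₁).log
      (hankelW2_pos hhalf2 hα ht0 ht1 n₁).ne'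
  have hev : (fun s => Real.log (hankelW α β s N)) =ᶠ[nhds t]
      (fun s => Real.log (hankelW2 (-1/2) α β s n₀)
        + Real.log (hankelW2 (1/2) α β s n₁)) := by
    filter_upwards [Ioo_mem_nhds ht0 ht1] with s hs
    rw [hankelW_factor α β hα hs.1 hs.2 N n₀ n₁ hN h1 h2,
      Real.log_mul (hankelW2_pos hhalf hα hs.1 hs.2 n₀).ne'
        (hankelW2_pos hhalf2 hα hs.1 hs.2 n₁).ne']
  rw [hev.deriv_eq, deriv_fun_add hd1 hd2]

/-- Painlevé VI σ-function representation of the logarithmic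
`t`-derivative of the Hankel determinant, for even and odd matrix dimension. -/
theorem stmt_6 (α β : ℝ) (hα : -1 < α) :
    ∀ n : ℕ, ∀ t ∈ Set.Ioo (0:ℝ) 1,
      HW α β (2 * n) t
          = sigmaW2 t n (-1/2) α β + sigmaW2 t n (1/2) α β
            + (β ^ 2 / 2 + 2 * (n:ℝ) * β + 1/8) * t
            - (β / 2) * (2 * (n:ℝ) + α + β) + (n:ℝ) * ((n:ℝ) + α) ∧
      HW α β (2 * n + 1) t
          = sigmaW2 t (n + 1) (-1/2) α β + sigmaW2 t n (1/2) α β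
            + (β ^ 2 / 2 + (2 * (n:ℝ) + 1) * β + 1/8) * t
            - (β / 2) * (2 * (n:ℝ) + 1 + α + β)
            + (1/4) * (2 * (n:ℝ) + 1) * (2 * (n:ℝ) + 1 + 2 * α) := by
  intro n t ht
  obtain ⟨ht0, ht1⟩ := ht
  have hD1 := deriv_log_hankelW α β hα ht0 ht1 (2 * n) n n (by ring) le_rfl (by omega)
  have hD2 := deriv_log_hankelW α β hα ht0 ht1 (2 * n + 1) (n + 1) n (by ring)
    (by omega) (by omega)
  constructor
  · simp only [HW, sigmaW2, hD1]
    ring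
  · simp only [HW, sigmaW2, hD2]
    push_cast
    ring
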